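/- Let p be a prime and let f(n,p) = ρ(n,p)·(n/p)^(1 − φ(p)/p) = ρ(n,p)·(n/p)^(1/p). For every integer b with ⌊(p−1)/2⌋ < b ≤ p−1, the sequence a ↦ f(ap + b, p) is strictly decreasing for real a ≥ (p−1)/2, i.e. f((a+1)p + b, p) < f(ap + b, p) for all integers a with a ≥ (p−1)/2. -/

import Mathlib

/-- `rho n m` is the proportion of permutations in `Sym(n)` whose order is coprime to `m`.
Note that `rho 0 m = 1`. -/
noncomputable def rho (n m : ℕ) : ℝ :=
  (Finset.univ.filter (fun π : Equiv.Perm (Fin n) => Nat.Coprime (orderOf π) m)).card /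
    (Nat.factorial n : ℝ)

/-- `f n p = ρ(n,p) · (n/p)^(1 − φ(p)/p)`. -/
noncomputable def f (n p : ℕ) : ℝ :=
  rho n p * ((n : ℝ) / p) ^ ((1 : ℝ) - (Nat.totient p : ℝ) / p)

namespace Stmt8Aux

open Finset Equiv Equiv.Perm

/-- number of permutations of `α` with order coprime to `p` -/
noncomputable def gcnt (p : ℕ) (α : Type*) [Fintype α] [DecidableEq α] : ℕ :=
  (Finset.univ.filter (fun π : Equiv.Perm α => Nat.Coprime (orderOf π) p)).card

noncomputable def cnt (p n : ℕ) : ℕ := gcnt p (Fin n)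

lemma cnt_eq (p n : ℕ) :
    (Finset.univ.filter (fun π : Equiv.Perm (Fin n) => Nat.Coprime (orderOf π) p)).card
      = cnt p n := rfl

/-- a `MulEquiv` version of `Equiv.permCongr` -/
def permMulEquiv {α β : Type*} (e : α ≃ β) : Equiv.Perm α ≃* Equiv.Perm β :=
  { e.permCongr with
    map_mul' := by
      intro σ τ
      ext b
      simp [Equiv.permCongr_apply] }

lemma gcnt_congr (p : ℕ) {α β : Type*} [Fintype α] [DecidableEq α] [Fintype β] [DecidableEq β]
    (e : α ≃ β) : gcnt p α = gcnt p β := by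
  unfold gcnt
  apply Finset.card_nbij (fun π => permMulEquiv e π)
  · intro π hπ
    simp only [Finset.mem_coe, Finset.mem_filter, Finset.mem_univ, true_and] at hπ ⊢
    rwa [MulEquiv.orderOf_eq]
  · intro π _ π' _ h
    exact (permMulEquiv e).injective h
  · intro π hπ
    refine ⟨(permMulEquiv e).symm π, ?_, by simp⟩
    simp only [Finset.coe_filter, Set.mem_setOf_eq, Finset.mem_univ, true_and] at hπ ⊢
    rwa [MulEquiv.orderOf_eq]

lemma gcnt_eq_cnt (p : ℕ) {α : Type*} [Fintype α] [DecidableEq α] :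
    gcnt p α = cnt p (Fintype.card α) :=
  gcnt_congr p (Fintype.equivFin α)

lemma cnt_zero (p : ℕ) : cnt p 0 = 1 := by
  unfold cnt gcnt
  rw [Finset.filter_true_of_mem, Finset.card_univ, Fintype.card_perm]
  · simp
  · intro π _
    have : π = 1 := Subsingleton.elim _ _
    simp [this, Nat.coprime_one_left]

section Rec

variable {α : Type*} [Fintype α] [DecidableEq α]

lemma toList_congr {π π' : Equiv.Perm α} (x : α) (h : π.cycleOf x = π'.cycleOf x) :
    π.toList x = π'.toList x := by
  classical
  unfold Equiv.Perm.toList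
  rw [h]
  apply List.ext_getElem (by simp)
  intro k _ _
  simp only [List.getElem_iterate, ← Equiv.Perm.coe_pow]
  rw [← Equiv.Perm.cycleOf_pow_apply_self π x k, ← Equiv.Perm.cycleOf_pow_apply_self π' x k, h]

lemma coprime_lcm_iff {p : ℕ} (hp : p.Prime) (a b : ℕ) :
    Nat.Coprime (Nat.lcm a b) p ↔ (¬ p ∣ a ∧ Nat.Coprime b p) := by
  constructor
  · intro h
    have h' : ¬ p ∣ Nat.lcm a b := by rwa [Nat.coprime_comm, hp.coprime_iff_not_dvd] at h
    refine ⟨fun ha => h' (ha.trans (Nat.dvd_lcm_left a b)), ?_⟩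
    rw [Nat.coprime_comm, hp.coprime_iff_not_dvd]
    exact fun hb => h' (hb.trans (Nat.dvd_lcm_right a b))
  · rintro ⟨ha, hb⟩
    rw [Nat.coprime_comm, hp.coprime_iff_not_dvd] at hb ⊢
    intro h
    rcases (Nat.Prime.dvd_mul hp).mp (h.trans (Nat.lcm_dvd_mul a b)) with h' | h'
    · exact ha h'
    · exact hb h'

lemma ofSubtype_injective (q : α → Prop) [DecidablePred q] :
    Function.Injective (Equiv.Perm.ofSubtype : Equiv.Perm (Subtype q) →* Equiv.Perm α) := by
  intro σ σ' h
  ext y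
  have := congrArg (fun π : Equiv.Perm α => π (y : α)) h
  simp only [Equiv.Perm.ofSubtype_apply_coe] at this
  exact this

/-- characterization of the image of the "cycle-of-x as list" map -/
lemma mem_image_T_iff (x : α) (l : List α) :
    l ∈ Finset.univ.image (fun π : Equiv.Perm α => if π x = x then [x] else π.toList x)
      ↔ (l = [x] ∨ (2 ≤ l.length ∧ l.Nodup ∧ l.head? = some x)) := by
  classical
  constructor
  · intro hl
    rw [Finset.mem_image] at hl
    obtain ⟨π, -, hπ⟩ := hl
    by_cases hx : π x = x
    · rw [if_pos hx] at hπ; exact Or.inl hπ.symm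
    · rw [if_neg hx] at hπ
      subst hπ
      refine Or.inr ⟨?_, Equiv.Perm.nodup_toList π x, ?_⟩
      · exact Equiv.Perm.two_le_length_toList_iff_mem_support.mpr (Equiv.Perm.mem_support.mpr hx)
      · have h0 := Equiv.Perm.toList_getElem_zero π x (Equiv.Perm.mem_support.mpr hx)
        have hpos : 0 < (π.toList x).length :=
          Equiv.Perm.length_toList_pos_of_mem_support _ _ (Equiv.Perm.mem_support.mpr hx)
        rw [List.head?_eq_getElem?, List.getElem?_eq_getElem hpos]
        exact congrArg some h0
  · rintro (rfl | ⟨hlen, hnodup, hhead⟩)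
    · rw [Finset.mem_image]
      exact ⟨1, Finset.mem_univ _, by simp⟩
    · rw [Finset.mem_image]
      have hxl : x ∈ l := by
        rcases l with - | ⟨a, t⟩
        · simp at hhead
        · simp only [List.head?_cons, Option.some.injEq] at hhead
          rw [← hhead]; exact List.mem_cons_self
      have hne : (l.formPerm) x ≠ x :=
        (List.formPerm_apply_mem_ne_self_iff _ hnodup _ hxl).mpr hlen
      refine ⟨l.formPerm, Finset.mem_univ _, ?_⟩
      rw [if_neg hne]
      have hget : l.get ⟨0, by omega⟩ = x := by
        rcases l with - | ⟨a, t⟩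
        · simp at hlen
        · simp only [List.head?_cons, Option.some.injEq] at hhead
          simpa using hhead
      have := Equiv.Perm.toList_formPerm_nontrivial l hlen hnodup
      rwa [hget] at this

/-- cardinality of a fiber of the cycle-of-x map -/
lemma fiber_card {p : ℕ} (hp : p.Prime) (x : α) (l : List α)
    (hl : l = [x] ∨ (2 ≤ l.length ∧ l.Nodup ∧ l.head? = some x)) :
    (Finset.filter (fun π => (if π x = x then [x] else π.toList x) = l)
        (Finset.univ.filter (fun π : Equiv.Perm α => Nat.Coprime (orderOf π) p))).card
      = if p ∣ l.length then 0 else cnt p (Fintype.card α - l.length) := by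
  classical
  have hxl : x ∈ l := by
    rcases hl with rfl | ⟨hlen, hnodup, hhead⟩
    · exact List.mem_singleton_self x
    · rcases l with - | ⟨a, t⟩
      · simp at hhead
      · simp only [List.head?_cons, Option.some.injEq] at hhead
        rw [← hhead]; exact List.mem_cons_self
  have hnodup : l.Nodup := by
    rcases hl with rfl | ⟨-, hnodup, -⟩
    · simp
    · exact hnodup
  set c : Equiv.Perm α := l.formPerm with hc
  -- basic facts about c
  have hccx : c.cycleOf x = c := by
    rcases hl with rfl | ⟨hlen, hnd, hhead⟩
    · rw [hc, List.formPerm_singleton]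
      exact (Equiv.Perm.cycleOf_eq_one_iff 1).mpr rfl
    · have hcyc : c.IsCycle := List.isCycle_formPerm hnd hlen
      exact hcyc.cycleOf_eq ((List.formPerm_apply_mem_ne_self_iff _ hnd _ hxl).mpr hlen)
  have horder : orderOf c = l.length := by
    rcases hl with rfl | ⟨hlen, hnd, hhead⟩
    · simp [hc, List.formPerm_singleton]
    · have hcyc : c.IsCycle := List.isCycle_formPerm hnd hlen
      rw [hcyc.orderOf, hc, List.support_formPerm_of_nodup l hnd, List.toFinset_card_of_nodup hnd]
      intro z hz
      rw [hz] at hlen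
      simp at hlen
  have hfixc : ∀ y, y ∉ l → c y = y := fun y hy => List.formPerm_apply_of_notMem hy
  -- the fiber is exactly the set of good perms with cycleOf x = c
  have claim0 : ∀ π : Equiv.Perm α,
      ((if π x = x then [x] else π.toList x) = l ↔ π.cycleOf x = c) := by
    intro π
    constructor
    · intro h
      by_cases hx : π x = x
      · rw [if_pos hx] at h
        rw [(Equiv.Perm.cycleOf_eq_one_iff π).mpr hx, hc, ← h, List.formPerm_singleton]
      · rw [if_neg hx] at h
        rw [hc, ← h, Equiv.Perm.formPerm_toList]
    · intro h
      rcases hl with rfl | ⟨hlen, hnd, hhead⟩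
      · have hc1 : c = 1 := by rw [hc, List.formPerm_singleton]
        rw [hc1] at h
        rw [if_pos ((Equiv.Perm.cycleOf_eq_one_iff π).mp h)]
      · have hcyc : c.IsCycle := List.isCycle_formPerm hnd hlen
        have hcx : c x ≠ x := (List.formPerm_apply_mem_ne_self_iff _ hnd _ hxl).mpr hlen
        have hx : π x ≠ x := by
          intro hx
          rw [(Equiv.Perm.cycleOf_eq_one_iff π).mpr hx] at h
          exact hcx (by rw [← h]; rfl)
        rw [if_neg hx]
        have h1 : π.toList x = c.toList x := toList_congr x (by rw [h, hccx])
        have hget : l.get ⟨0, by omega⟩ = x := by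
          rcases l with - | ⟨a, t⟩
          · simp at hlen
          · simp only [List.head?_cons, Option.some.injEq] at hhead
            simpa using hhead
        have h2 := Equiv.Perm.toList_formPerm_nontrivial l hlen hnd
        rw [hget] at h2
        rw [h1, hc, h2]
  rw [Finset.filter_congr (fun π _ => claim0 π)]
  -- bijection with permutations of the complement
  have key : (Finset.filter (fun π => π.cycleOf x = c)
        (Finset.univ.filter (fun π : Equiv.Perm α => Nat.Coprime (orderOf π) p))).card
      = (Finset.univ.filter (fun σ : Equiv.Perm {y : α // y ∉ l} =>
          Nat.Coprime (orderOf (c * Equiv.Perm.ofSubtype σ)) p)).card := by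
    symm
    apply Finset.card_nbij (fun σ => c * Equiv.Perm.ofSubtype σ)
    · intro σ hσ
      rw [Finset.mem_coe, Finset.mem_filter] at hσ ⊢
      refine ⟨Finset.mem_filter.mpr ⟨Finset.mem_univ _, hσ.2⟩, ?_⟩
      have hτx : Equiv.Perm.ofSubtype σ x = x :=
        Equiv.Perm.ofSubtype_apply_of_not_mem σ (not_not.mpr hxl)
      have hdisj : c.Disjoint (Equiv.Perm.ofSubtype σ) := by
        intro y
        by_cases hy : y ∈ l
        · exact Or.inr (Equiv.Perm.ofSubtype_apply_of_not_mem σ (not_not.mpr hy))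
        · exact Or.inl (hfixc y hy)
      rw [Equiv.Perm.cycleOf_mul_of_apply_right_eq_self hdisj.commute x hτx, hccx]
    · intro σ _ σ' _ h
      exact ofSubtype_injective _ (mul_left_cancel h)
    · intro π hπ
      simp only [Finset.coe_filter, Set.mem_setOf_eq, Finset.mem_filter, Finset.mem_univ,
        true_and] at hπ
      obtain ⟨hgood, hcyc⟩ := hπ
      set τ : Equiv.Perm α := c⁻¹ * π with hτ
      have hstab : ∀ y ∈ l, τ y = y := by
        intro y hy
        have hπy : π y = c y := by
          rcases hl with rfl | ⟨hlen, hnd, hhead⟩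
          · have : y = x := List.mem_singleton.mp hy
            subst this
            have hc1 : c = 1 := by rw [hc, List.formPerm_singleton]
            have : π y = y := (Equiv.Perm.cycleOf_eq_one_iff π).mp (by rw [hcyc, hc1])
            rw [this, hc1]; rfl
          · have hcyc' : c.IsCycle := List.isCycle_formPerm hnd hlen
            have hsupp : c.support = l.toFinset := by
              rw [hc]
              apply List.support_formPerm_of_nodup l hnd
              intro z hz
              rw [hz] at hlen; simp at hlen
            have hy' : y ∈ (π.cycleOf x).support := by
              rw [hcyc, hsupp]
              exact List.mem_toFinset.mpr hy
            have hsame : π.SameCycle x y := (Equiv.Perm.mem_support_cycleOf_iff.mp hy').1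
            have := Equiv.Perm.cycleOf_apply π x y
            rw [if_pos hsame] at this
            rw [← this, hcyc]
        rw [hτ]
        simp [hπy]
      have hstab' : ∀ y, (y ∉ l) ↔ (τ y ∉ l) := by
        intro y
        constructor
        · intro hy hty
          have := hstab _ hty
          have hyy : τ y = y := τ.injective this
          rw [← hyy] at hy
          exact hy hty
        · intro hty hy
          exact hty (by rw [hstab y hy]; exact hy)
      refine ⟨τ.subtypePerm (fun y => (hstab' y).symm), ?_, ?_⟩
      · have hofs : Equiv.Perm.ofSubtype (τ.subtypePerm (fun y => (hstab' y).symm)) = τ :=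
          Equiv.Perm.ofSubtype_subtypePerm (p := fun y => y ∉ l) (fun y => (hstab' y).symm) (fun y hy => by
            intro hyl
            exact hy (hstab y hyl))
        simp only [Finset.coe_filter, Set.mem_setOf_eq, Finset.mem_univ, true_and]
        rw [hofs, hτ, mul_inv_cancel_left]
        exact hgood
      · have hofs : Equiv.Perm.ofSubtype (τ.subtypePerm (fun y => (hstab' y).symm)) = τ :=
          Equiv.Perm.ofSubtype_subtypePerm (p := fun y => y ∉ l) (fun y => (hstab' y).symm) (fun y hy => by
            intro hyl
            exact hy (hstab y hyl))
        show c * Equiv.Perm.ofSubtype (τ.subtypePerm (fun y => (hstab' y).symm)) = π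
        rw [hofs, hτ, mul_inv_cancel_left]
  rw [key]
  -- compute the σ-side cardinality
  have hcard_sub : Fintype.card {y : α // y ∉ l} = Fintype.card α - l.length := by
    rw [Fintype.card_subtype_compl]
    congr 1
    exact (Fintype.card_of_subtype l.toFinset (fun y => List.mem_toFinset)).trans
      (List.toFinset_card_of_nodup hnodup)
  have hcond : ∀ σ : Equiv.Perm {y : α // y ∉ l},
      Nat.Coprime (orderOf (c * Equiv.Perm.ofSubtype σ)) p
        ↔ (¬ p ∣ l.length ∧ Nat.Coprime (orderOf σ) p) := by
    intro σ
    have hdisj : c.Disjoint (Equiv.Perm.ofSubtype σ) := by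
      intro y
      by_cases hy : y ∈ l
      · exact Or.inr (Equiv.Perm.ofSubtype_apply_of_not_mem σ (not_not.mpr hy))
      · exact Or.inl (hfixc y hy)
    rw [hdisj.orderOf, horder,
      orderOf_injective Equiv.Perm.ofSubtype (ofSubtype_injective _) σ]
    exact coprime_lcm_iff hp _ _
  by_cases hdvd : p ∣ l.length
  · rw [if_pos hdvd]
    rw [Finset.filter_false_of_mem (fun σ _ h => ((hcond σ).mp h).1 hdvd), Finset.card_empty]
  · rw [if_neg hdvd]
    have hfc : Finset.univ.filter (fun σ : Equiv.Perm {y : α // y ∉ l} =>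
          Nat.Coprime (orderOf (c * Equiv.Perm.ofSubtype σ)) p)
        = Finset.univ.filter (fun σ : Equiv.Perm {y : α // y ∉ l} =>
          Nat.Coprime (orderOf σ) p) := by
      apply Finset.filter_congr
      intro σ _
      rw [hcond σ]
      exact ⟨fun h => h.2, fun h => ⟨hdvd, h⟩⟩
    rw [hfc, ← hcard_sub, ← gcnt_eq_cnt]
    rfl

/-- counting the lists of length `k` in the image -/
lemma valid_count (x : α) (m : ℕ) (hcard : Fintype.card α = m + 1) (k : ℕ) (hk1 : 1 ≤ k) :
    ((Finset.univ.image (fun π : Equiv.Perm α => if π x = x then [x] else π.toList x)).filter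
        (fun l => l.length = k)).card = m.descFactorial (k - 1) := by
  classical
  rcases eq_or_lt_of_le hk1 with rfl | hk2
  · rw [show ((Finset.univ.image (fun π : Equiv.Perm α => if π x = x then [x] else π.toList x)).filter
        (fun l => l.length = 1)) = {[x]} from ?_]
    · simp
    · ext l
      simp only [Finset.mem_filter, Finset.mem_singleton]
      rw [mem_image_T_iff]
      constructor
      · rintro ⟨rfl | ⟨hlen, -, -⟩, hl1⟩
        · rfl
        · omega
      · rintro rfl
        exact ⟨Or.inl rfl, rfl⟩
  · -- k ≥ 2
    have hk2' : 2 ≤ k := hk2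
    symm
    have hcard' : Fintype.card {y : α // y ≠ x} = m := by
      rw [Fintype.card_subtype_compl, hcard, Fintype.card_subtype_eq]
      omega
    rw [show m.descFactorial (k - 1)
        = Fintype.card (Fin (k-1) ↪ {y : α // y ≠ x}) from by
      rw [Fintype.card_embedding_eq, hcard', Fintype.card_fin]]
    rw [← Finset.card_univ]
    apply Finset.card_nbij (fun e : Fin (k-1) ↪ {y : α // y ≠ x} =>
      x :: List.ofFn (fun i => (e i : α)))
    · intro e _
      rw [Finset.mem_coe, Finset.mem_filter]
      constructor
      · rw [mem_image_T_iff]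
        refine Or.inr ⟨?_, ?_, rfl⟩
        · simp only [List.length_cons, List.length_ofFn]
          omega
        · rw [List.nodup_cons]
          constructor
          · intro hmem
            rw [List.mem_ofFn] at hmem
            obtain ⟨i, hi⟩ := hmem
            exact (e i).2 hi
          · rw [List.nodup_ofFn]
            intro i j h
            exact e.injective (Subtype.ext h)
      · simp only [List.length_cons, List.length_ofFn]
        omega
    · intro e _ e' _ h
      simp only [List.cons.injEq, true_and] at h
      have hfn := List.ofFn_injective h
      apply DFunLike.ext
      intro i
      exact Subtype.ext (congrFun hfn i)
    · intro l hl
      simp only [Finset.coe_filter, Set.mem_setOf_eq, Finset.mem_filter] at hl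
      obtain ⟨hmem, hlen⟩ := hl
      rw [mem_image_T_iff] at hmem
      rcases hmem with rfl | ⟨hlen2, hnodup, hhead⟩
      · simp at hlen; omega
      · rcases l with - | ⟨a, rest⟩
        · simp at hlen2
        · simp only [List.head?_cons, Option.some.injEq] at hhead
          subst hhead
          simp only [List.length_cons] at hlen
          have hrlen : k - 1 = rest.length := by omega
          rw [List.nodup_cons] at hnodup
          obtain ⟨hxrest, hrnodup⟩ := hnodup
          refine ⟨⟨fun i => ⟨rest.get (Fin.cast hrlen i), fun h => hxrest (h ▸ List.get_mem rest (Fin.cast hrlen i))⟩,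
            fun i j h => ?_⟩, Finset.mem_coe.mpr (Finset.mem_univ _), ?_⟩
          · have h' : rest.get (Fin.cast hrlen i) = rest.get (Fin.cast hrlen j) := by
              exact Subtype.ext_iff.mp h
            have := List.nodup_iff_injective_get.mp hrnodup h'
            have hval := congrArg Fin.val this
            exact Fin.ext hval
          · simp only [List.cons.injEq, true_and]
            apply List.ext_get
            · simp [← hrlen]
            · intro n h1 h2
              simp [List.get_ofFn]
              rfl

end Rec

/-- the main recursion -/
lemma cnt_rec {p : ℕ} (hp : p.Prime) (m : ℕ) :
    cnt p (m + 1) = ∑ k ∈ Finset.Icc 1 (m + 1),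
      if p ∣ k then 0 else m.descFactorial (k - 1) * cnt p (m + 1 - k) := by
  classical
  set α := Fin (m + 1)
  set x : α := 0
  have hcard : Fintype.card α = m + 1 := Fintype.card_fin _
  set T : Equiv.Perm α → List α := fun π => if π x = x then [x] else π.toList x with hT
  set s : Finset (Equiv.Perm α) :=
    Finset.univ.filter (fun π : Equiv.Perm α => Nat.Coprime (orderOf π) p) with hs
  set t : Finset (List α) := Finset.univ.image T with ht
  have h1 : cnt p (m + 1) = s.card := rfl
  have hmaps : ∀ π ∈ s, T π ∈ t := fun π _ => Finset.mem_image_of_mem T (Finset.mem_univ π)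
  rw [h1, Finset.card_eq_sum_card_fiberwise hmaps]
  have hlenmaps : ∀ l ∈ t, l.length ∈ Finset.Icc 1 (m + 1) := by
    intro l hl
    rw [ht, mem_image_T_iff] at hl
    rw [Finset.mem_Icc]
    rcases hl with rfl | ⟨hlen, hnodup, -⟩
    · simp
    · have := hnodup.length_le_card
      rw [hcard] at this
      omega
  rw [← Finset.sum_fiberwise_of_maps_to hlenmaps (fun l => (Finset.filter (fun a => T a = l) s).card)]
  apply Finset.sum_congr rfl
  intro k hk
  rw [Finset.mem_Icc] at hk
  have hinner : ∀ l ∈ t.filter (fun l => l.length = k),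
      (Finset.filter (fun a => T a = l) s).card = if p ∣ k then 0 else cnt p (m + 1 - k) := by
    intro l hl
    rw [Finset.mem_filter] at hl
    obtain ⟨hlt, hlk⟩ := hl
    rw [ht, mem_image_T_iff] at hlt
    have := fiber_card hp x l hlt
    rw [hlk, hcard] at this
    exact this
  rw [Finset.sum_congr rfl hinner, Finset.sum_const, smul_eq_mul]
  rw [valid_count x m hcard k hk.1]
  by_cases hdvd : p ∣ k
  · simp [hdvd]
  · simp [hdvd]

/-- the product `∏_{i=1}^{a} (1 - 1/(i p))` -/
noncomputable def R (p a : ℕ) : ℝ := ∏ i ∈ Finset.range a, (1 - 1 / (((i : ℝ) + 1) * p))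

lemma R_pos {p : ℕ} (hp : 2 ≤ p) (a : ℕ) : 0 < R p a := by
  apply Finset.prod_pos
  intro i _
  have h1 : (2 : ℝ) ≤ ((i : ℝ) + 1) * p := by
    have : (2 : ℝ) ≤ (p : ℝ) := by exact_mod_cast hp
    nlinarith [Nat.cast_nonneg (α := ℝ) i]
  have h2 : 1 / (((i : ℝ) + 1) * p) ≤ 1 / 2 := by
    apply div_le_div_of_nonneg_left <;> linarith
  have h3 : 0 < (((i : ℝ) + 1) * p) := by linarith
  have := one_div_pos.mpr h3
  linarith

lemma R_succ (p a : ℕ) : R p (a + 1) = R p a * (1 - 1 / (((a : ℝ) + 1) * p)) := by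
  unfold R; rw [Finset.prod_range_succ]

/-- key arithmetic identity -/
lemma sum_R {p : ℕ} (hp : 2 ≤ p) (a b : ℕ) (hb : b < p) :
    ∑ j ∈ Finset.range (a * p + b), (if j % p = b then (0 : ℝ) else R p (j / p))
      = ((a * p + b : ℕ) : ℝ) * R p a := by
  induction a with
  | zero =>
    simp only [Nat.zero_mul, Nat.zero_add]
    rw [Finset.sum_congr rfl (g := fun _ => R p 0) (fun j hj => ?_), Finset.sum_const,
      Finset.card_range, nsmul_eq_mul]
    rw [Finset.mem_range] at hj
    have h1 : j % p = j := Nat.mod_eq_of_lt (by omega)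
    have h2 : j / p = 0 := Nat.div_eq_of_lt (by omega)
    rw [h1, h2, if_neg (by omega)]
  | succ a ih =>
    have hsplit : (a + 1) * p + b = (a * p + b) + p := by ring
    rw [hsplit, Finset.sum_range_add, ih]
    -- the block sum
    have hpb : p = (p - b) + b := by omega
    rw [show (∑ i ∈ Finset.range p,
          (if (a * p + b + i) % p = b then (0:ℝ) else R p ((a * p + b + i) / p)))
        = ∑ i ∈ Finset.range ((p - b) + b),
          (if (a * p + b + i) % p = b then (0:ℝ) else R p ((a * p + b + i) / p)) from by
      rw [← hpb]]
    rw [Finset.sum_range_add]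
    -- first block : i < p - b
    have hfirst : ∑ i ∈ Finset.range (p - b),
        (if (a * p + b + i) % p = b then (0:ℝ) else R p ((a * p + b + i) / p))
        = ((p - b - 1 : ℕ) : ℝ) * R p a := by
      rw [Finset.sum_congr rfl (g := fun i => if i = 0 then (0:ℝ) else R p a) (fun i hi => ?_)]
      · have h1 : p - b = (p - b - 1) + 1 := by omega
        rw [h1, Finset.sum_range_succ', if_pos rfl, add_zero,
          Finset.sum_congr rfl (g := fun _ => R p a) (fun i _ => if_neg (by omega)),
          Finset.sum_const, Finset.card_range, nsmul_eq_mul]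
        norm_num
      · rw [Finset.mem_range] at hi
        have hlt : b + i < p := by omega
        have h1 : (a * p + b + i) % p = b + i := by
          rw [Nat.add_comm (a*p) b, Nat.add_right_comm, Nat.add_mul_mod_self_right,
            Nat.mod_eq_of_lt hlt]
        have h2 : (a * p + b + i) / p = a := by
          rw [Nat.add_comm (a*p) b, Nat.add_right_comm, Nat.add_mul_div_right _ _ (by omega : 0 < p),
            Nat.div_eq_of_lt hlt, Nat.zero_add]
        rw [h1, h2]
        by_cases h : i = 0
        · simp [h]
        · have hne : ¬ (b + i = b) := by omega
          simp [h, hne]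
    -- second block : i < b
    have hsecond : ∑ i ∈ Finset.range b,
        (if (a * p + b + ((p - b) + i)) % p = b then (0:ℝ) else R p ((a * p + b + ((p - b) + i)) / p))
        = (b : ℝ) * R p (a + 1) := by
      rw [Finset.sum_congr rfl (g := fun _ => R p (a+1)) (fun i hi => ?_), Finset.sum_const,
        Finset.card_range, nsmul_eq_mul]
      rw [Finset.mem_range] at hi
      have he : a * p + b + ((p - b) + i) = i + (a + 1) * p := by
        have : b ≤ p := le_of_lt hb
        zify [this]
        ring
      have h1 : (a * p + b + ((p - b) + i)) % p = i := by
        rw [he, Nat.add_mul_mod_self_right, Nat.mod_eq_of_lt (by omega)]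
      have h2 : (a * p + b + ((p - b) + i)) / p = a + 1 := by
        rw [he, Nat.add_mul_div_right _ _ (by omega : 0 < p), Nat.div_eq_of_lt (by omega),
          Nat.zero_add]
      rw [h1, h2, if_neg (by omega)]
    rw [hfirst, hsecond, R_succ]
    have hc : ((p - b - 1 : ℕ) : ℝ) = (p : ℝ) - b - 1 := by
      rw [Nat.cast_sub (by omega : 1 ≤ p - b), Nat.cast_sub (by omega : b ≤ p)]
      push_cast
      ring
    have hppos : (0:ℝ) < (p:ℝ) := by exact_mod_cast (by omega : 0 < p)
    have hA : (0:ℝ) < ((a:ℝ) + 1) * p := by positivity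
    rw [hc]
    push_cast
    field_simp
    ring

/-- closed form -/
lemma cnt_closed {p : ℕ} (hp : p.Prime) (n : ℕ) :
    (cnt p n : ℝ) = (Nat.factorial n : ℝ) * R p (n / p) := by
  induction n using Nat.strong_induction_on with
  | _ n ih =>
    match n with
    | 0 => simp [cnt_zero, R]
    | (m + 1) =>
      rw [cnt_rec hp m]
      push_cast
      have hterm : ∀ k ∈ Finset.Icc 1 (m + 1),
          (if p ∣ k then (0:ℝ) else (m.descFactorial (k-1) : ℝ) * (cnt p (m + 1 - k) : ℝ))
          = (m.factorial : ℝ) * (if p ∣ k then (0:ℝ) else R p ((m + 1 - k) / p)) := by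
        intro k hk
        rw [Finset.mem_Icc] at hk
        by_cases hdvd : p ∣ k
        · simp [hdvd]
        · rw [if_neg hdvd, if_neg hdvd, ih (m + 1 - k) (by omega)]
          have hfac : ((m + 1 - k).factorial : ℝ) * (m.descFactorial (k-1) : ℝ)
              = (m.factorial : ℝ) := by
            rw [← Nat.cast_mul]
            norm_cast
            rw [show m + 1 - k = m - (k - 1) by omega]
            exact Nat.factorial_mul_descFactorial (by omega)
          calc (m.descFactorial (k-1) : ℝ) * (((m + 1 - k).factorial : ℝ) * R p ((m+1-k)/p))
              = ((m + 1 - k).factorial : ℝ) * (m.descFactorial (k-1) : ℝ) * R p ((m+1-k)/p) := by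
                ring
            _ = (m.factorial : ℝ) * R p ((m+1-k)/p) := by rw [hfac]
      rw [Finset.sum_congr rfl hterm, ← Finset.mul_sum]
      -- reindex : j = m + 1 - k
      have hreindex : ∑ k ∈ Finset.Icc 1 (m + 1), (if p ∣ k then (0:ℝ) else R p ((m + 1 - k) / p))
          = ∑ j ∈ Finset.range (m + 1),
              (if j % p = (m + 1) % p then (0:ℝ) else R p (j / p)) := by
        apply Finset.sum_nbij' (fun k => m + 1 - k) (fun j => m + 1 - j)
        · intro k hk; rw [Finset.mem_Icc] at hk; rw [Finset.mem_range]; omega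
        · intro j hj; rw [Finset.mem_range] at hj; rw [Finset.mem_Icc]; omega
        · intro k hk; rw [Finset.mem_Icc] at hk; omega
        · intro j hj; rw [Finset.mem_range] at hj; omega
        · intro k hk
          rw [Finset.mem_Icc] at hk
          have hiff : p ∣ k ↔ (m + 1 - k) % p = (m + 1) % p := by
            have h1 := Nat.modEq_iff_dvd' (by omega : m + 1 - k ≤ m + 1) (n := p)
            rw [show m + 1 - (m + 1 - k) = k by omega] at h1
            unfold Nat.ModEq at h1
            exact h1.symm
          by_cases hdvd : p ∣ k
          · rw [if_pos hdvd, if_pos (hiff.mp hdvd)]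
          · rw [if_neg hdvd, if_neg (fun h => hdvd (hiff.mpr h))]
      have hblt : (m + 1) % p < p := Nat.mod_lt _ hp.pos
      have hsR := sum_R hp.two_le ((m+1)/p) ((m+1)%p) hblt
      rw [show ((m+1)/p) * p + (m+1) % p = m + 1 from by rw [Nat.mul_comm]; exact Nat.div_add_mod (m+1) p] at hsR
      rw [hreindex, hsR, Nat.factorial_succ]
      push_cast
      ring

lemma div_eq_of_lt_of_mul {p b : ℕ} (hp : 0 < p) (hb : b < p) (a : ℕ) :
    (a * p + b) / p = a := by
  rw [Nat.add_comm, Nat.add_mul_div_right _ _ hp, Nat.div_eq_of_lt hb, Nat.zero_add]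

lemma rho_eq {p : ℕ} (hp : p.Prime) (a b : ℕ) (hb : b < p) :
    rho (a * p + b) p = R p a := by
  unfold rho
  rw [cnt_eq, cnt_closed hp, div_eq_of_lt_of_mul hp.pos hb]
  have hfac : ((a * p + b).factorial : ℝ) ≠ 0 := by
    exact_mod_cast (a * p + b).factorial_ne_zero
  field_simp

/-- quadratic upper bound for (1-t)^n -/
lemma pow_one_sub_le (n : ℕ) (t : ℝ) (h0 : 0 ≤ t) (h1 : t ≤ 1) :
    (1 - t) ^ n ≤ 1 - n * t + (n * (n - 1)) / 2 * t ^ 2 := by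
  induction n with
  | zero => norm_num
  | succ n ih =>
    have hnn : (0 : ℝ) ≤ 1 - t := by linarith
    have h2 : (1 - t) ^ (n + 1) = (1 - t) ^ n * (1 - t) := by ring
    have h3 : (1 - t) ^ n * (1 - t) ≤ (1 - n * t + (n * (n - 1)) / 2 * t ^ 2) * (1 - t) :=
      mul_le_mul_of_nonneg_right ih hnn
    rw [h2]
    refine h3.trans ?_
    push_cast
    have hn : (0:ℝ) ≤ (n:ℝ) * ((n:ℝ) - 1) := by
      rcases Nat.eq_zero_or_pos n with h | h
      · simp [h]
      · have : (1:ℝ) ≤ (n:ℝ) := by exact_mod_cast h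
        nlinarith
    nlinarith [mul_nonneg hn (pow_nonneg h0 3)]


lemma core_ineq (p : ℕ) (hp : p.Prime) (b : ℕ) (hb1 : (p - 1) / 2 < b) (hb2 : b ≤ p - 1)
    (A s : ℝ) (hs : s = (b:ℝ)/(p:ℝ)) (hA : ((p:ℝ) + 1)/2 ≤ A) :
    ((p:ℝ) - 1) * (A + s) < 2 * (p:ℝ) * s * A := by
  have hp2 : 2 ≤ p := hp.two_le
  have hppos : (0:ℝ) < (p:ℝ) := by exact_mod_cast hp.pos
  have hp2r : (2:ℝ) ≤ (p:ℝ) := by exact_mod_cast hp2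
  have hb0 : 1 ≤ b := by omega
  have hbp : b < p := by omega
  have hA1 : (0:ℝ) < A := by linarith
  have hs1 : s < 1 := by
    rw [hs, div_lt_one hppos]
    exact_mod_cast hbp
  have hs0 : 0 < s := by
    rw [hs]
    have : (0:ℝ) < (b:ℝ) := by exact_mod_cast hb0
    positivity
  rcases eq_or_lt_of_le hp2 with hp2' | hp3
  · -- p = 2, so b = 1
    have hb1' : b = 1 := by omega
    have hpr : (p:ℝ) = 2 := by exact_mod_cast hp2'.symm
    have hsr : s = 1/2 := by rw [hs, hpr, hb1']; norm_num
    have hA32 : (3:ℝ)/2 ≤ A := by rw [hpr] at hA; linarith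
    rw [hpr, hsr]
    nlinarith
  · -- p odd, 2b ≥ p + 1
    have hodd : p % 2 = 1 := hp.eq_two_or_odd.resolve_left (by omega)
    have h2b : p + 1 ≤ 2 * b := by omega
    have h2br : (p:ℝ) + 1 ≤ 2 * (b:ℝ) := by exact_mod_cast h2b
    have h2ps : (p:ℝ) + 1 ≤ 2 * (p:ℝ) * s := by
      rw [hs]
      have hr : 2 * (p:ℝ) * ((b:ℝ)/(p:ℝ)) = 2 * (b:ℝ) := by
        field_simp
      rw [hr]
      exact h2br
    have hfact1 : ((p:ℝ) + 1) * A ≤ (2 * (p:ℝ) * s) * A :=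
      mul_le_mul_of_nonneg_right h2ps hA1.le
    have hp1 : (1:ℝ) ≤ (p:ℝ) - 1 := by
      have : (3:ℝ) ≤ (p:ℝ) := by exact_mod_cast hp3
      linarith
    have hfact2 : ((p:ℝ) - 1) * s < (p:ℝ) - 1 := by nlinarith
    have hfact3 : (p:ℝ) + 1 ≤ 2 * A := by linarith
    nlinarith

lemma key_ineq (p : ℕ) (hp2 : 2 ≤ p) (A s t : ℝ) (hA1 : 1 ≤ A) (hs0 : 0 < s)
    (ht : t = 1/(A * (p:ℝ)))
    (hcore : ((p:ℝ) - 1) * (A + s) < 2 * (p:ℝ) * s * A) :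
    (1 - t) ^ p * (A + s) < (A - 1) + s := by
  have hppos : (0:ℝ) < (p:ℝ) := by exact_mod_cast (by omega : 0 < p)
  have hp2r : (2:ℝ) ≤ (p:ℝ) := by exact_mod_cast hp2
  have hApos : (0:ℝ) < A := by linarith
  have h2Ap : (2:ℝ) ≤ A * (p:ℝ) := by nlinarith
  have ht0 : 0 ≤ t := by
    rw [ht]
    positivity
  have ht1 : t ≤ 1 := by
    rw [ht, div_le_one (by linarith)]
    linarith
  have hbound := pow_one_sub_le p t ht0 ht1
  have hpt : (p:ℝ) * t = 1/A := by
    rw [ht]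
    field_simp
  have hct : ((p:ℝ) * ((p:ℝ) - 1))/2 * t^2 = ((p:ℝ) - 1)/(2 * (p:ℝ) * A^2) := by
    rw [ht]
    field_simp
  have hQlt : (1 - (p:ℝ) * t + ((p:ℝ) * ((p:ℝ) - 1))/2 * t^2) * (A + s) < (A - 1) + s := by
    rw [hpt, hct]
    have h2pA2 : (0:ℝ) < 2 * (p:ℝ) * A^2 := by positivity
    have hGdiff : ((A - 1) + s) - (1 - 1/A + ((p:ℝ) - 1)/(2 * (p:ℝ) * A^2)) * (A + s)
        = (2 * (p:ℝ) * A * s - ((p:ℝ) - 1) * A - ((p:ℝ) - 1) * s)/(2 * (p:ℝ) * A^2) := by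
      field_simp
      ring
    have hnum : 0 < 2 * (p:ℝ) * A * s - ((p:ℝ) - 1) * A - ((p:ℝ) - 1) * s := by nlinarith
    have hpos := div_pos hnum h2pA2
    rw [← hGdiff] at hpos
    linarith
  have hAs : (0:ℝ) ≤ A + s := by linarith
  calc (1 - t) ^ p * (A + s)
      ≤ (1 - (p:ℝ) * t + ((p:ℝ) * ((p:ℝ) - 1))/2 * t^2) * (A + s) :=
        mul_le_mul_of_nonneg_right hbound hAs
    _ < (A - 1) + s := hQlt

lemma final_core (p : ℕ) (hp2 : 2 ≤ p) (Ra q X Y : ℝ) (hRa : 0 < Ra) (hq : 0 < q)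
    (hX : 0 < X) (hY : 0 < Y) (key : q ^ p * Y < X) :
    Ra * q * Y ^ ((1:ℝ)/(p:ℝ)) < Ra * X ^ ((1:ℝ)/(p:ℝ)) := by
  have hppos : (0:ℝ) < (p:ℝ) := by exact_mod_cast (by omega : 0 < p)
  apply lt_of_pow_lt_pow_left₀ p (mul_pos hRa (Real.rpow_pos_of_pos hX _)).le
  rw [mul_pow, mul_pow, mul_pow]
  rw [← Real.rpow_natCast (Y ^ ((1:ℝ)/(p:ℝ))) p, ← Real.rpow_mul hY.le,
    one_div_mul_cancel (ne_of_gt hppos), Real.rpow_one]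
  rw [← Real.rpow_natCast (X ^ ((1:ℝ)/(p:ℝ))) p, ← Real.rpow_mul hX.le,
    one_div_mul_cancel (ne_of_gt hppos), Real.rpow_one]
  rw [mul_assoc]
  exact mul_lt_mul_of_pos_left key (pow_pos hRa p)

end Stmt8Aux

theorem stmt_8 (p : ℕ) (hp : p.Prime) (b : ℕ) (hb1 : (p - 1) / 2 < b) (hb2 : b ≤ p - 1) :
    ∀ a : ℕ, ((p : ℝ) - 1) / 2 ≤ (a : ℝ) → f ((a + 1) * p + b) p < f (a * p + b) p := by
  intro a ha
  have hp2 : 2 ≤ p := hp.two_le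
  have hppos : (0:ℝ) < (p:ℝ) := by exact_mod_cast hp.pos
  have hp2r : (2:ℝ) ≤ (p:ℝ) := by exact_mod_cast hp2
  have hb0 : 1 ≤ b := by omega
  have hbp : b < p := by omega
  have h1 : rho (a * p + b) p = Stmt8Aux.R p a := Stmt8Aux.rho_eq hp a b hbp
  have h2 : rho ((a + 1) * p + b) p = Stmt8Aux.R p (a + 1) := Stmt8Aux.rho_eq hp (a+1) b hbp
  have hexp : (1:ℝ) - (Nat.totient p : ℝ)/(p:ℝ) = 1/(p:ℝ) := by
    rw [Nat.totient_prime hp, Nat.cast_sub hp.one_le]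
    field_simp
    push_cast
    ring
  unfold f
  rw [h1, h2, hexp]
  have hcast2 : (((a + 1) * p + b : ℕ) : ℝ)/(p:ℝ) = ((a:ℝ) + 1) + (b:ℝ)/(p:ℝ) := by
    push_cast
    field_simp
  have hcast1 : ((a * p + b : ℕ) : ℝ)/(p:ℝ) = ((a:ℝ) + 1 - 1) + (b:ℝ)/(p:ℝ) := by
    push_cast
    field_simp
    ring
  rw [hcast1, hcast2, Stmt8Aux.R_succ]
  have hAbound : ((p:ℝ) + 1)/2 ≤ (a:ℝ) + 1 := by linarith
  have hA1 : (1:ℝ) ≤ (a:ℝ) + 1 := by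
    have := Nat.cast_nonneg (α := ℝ) a
    linarith
  have hs0 : 0 < (b:ℝ)/(p:ℝ) := by
    have : (0:ℝ) < (b:ℝ) := by exact_mod_cast hb0
    positivity
  have hs1 : (b:ℝ)/(p:ℝ) < 1 := by
    rw [div_lt_one hppos]
    exact_mod_cast hbp
  have hcore := Stmt8Aux.core_ineq p hp b hb1 hb2 ((a:ℝ) + 1) ((b:ℝ)/(p:ℝ)) rfl hAbound
  have key := Stmt8Aux.key_ineq p hp2 ((a:ℝ) + 1) ((b:ℝ)/(p:ℝ))
    (1 / (((a:ℝ) + 1) * (p:ℝ))) hA1 hs0 rfl hcore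
  have hq0 : 0 < 1 - 1 / (((a:ℝ) + 1) * (p:ℝ)) := by
    have h2Ap : (2:ℝ) ≤ ((a:ℝ) + 1) * (p:ℝ) := by nlinarith
    have : 1 / (((a:ℝ) + 1) * (p:ℝ)) ≤ 1/2 := by
      apply one_div_le_one_div_of_le <;> linarith
    linarith
  have hX : (0:ℝ) < ((a:ℝ) + 1 - 1) + (b:ℝ)/(p:ℝ) := by
    have := Nat.cast_nonneg (α := ℝ) a
    linarith
  have hY : (0:ℝ) < ((a:ℝ) + 1) + (b:ℝ)/(p:ℝ) := by linarith
  have hRa : 0 < Stmt8Aux.R p a := Stmt8Aux.R_pos hp2 a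
  exact Stmt8Aux.final_core p hp2 (Stmt8Aux.R p a)
    (1 - 1 / (((a:ℝ) + 1) * (p:ℝ))) (((a:ℝ) + 1 - 1) + (b:ℝ)/(p:ℝ))
    (((a:ℝ) + 1) + (b:ℝ)/(p:ℝ)) hRa hq0 hX hY key
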